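/- arXiv:2105.13322 — 2 statements merged into one kernel-verified Lean document; each statement's English description precedes it below -/
import Mathlib

section
/- Let G be a finite nilpotent group of even order n = p_1^{α_1} ··· p_r^{α_r} with p_1 = 2 < p_2 < ··· < p_r and r ≥ 3. Suppose the Sylow 2-subgroup of G is noncyclic and contains a maximal cyclic subgroup of order 2, and that all Sylow p_i-subgroups for i ≥ 2 are cyclic. Then δ(P(G)) < ∏_{i=2}^{r} p_i^{α_i}. -/
/-- The power graph of a group: distinct `x` and `y` are adjacent iff one is a
positive power of the other. -/
def powerGraph (G : Type*) [Group G] : SimpleGraph G where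
  Adj x y := x ≠ y ∧ ((∃ k : ℕ, 0 < k ∧ x = y ^ k) ∨ (∃ k : ℕ, 0 < k ∧ y = x ^ k))
  symm := by
    constructor
    intro x y h
    exact ⟨h.1.symm, h.2.symm⟩
  loopless := by
    constructor
    intro x h
    exact h.1 rfl

noncomputable instance powerGraphDecidableAdj (G : Type*) [Group G] :
    DecidableRel (powerGraph G).Adj :=
  Classical.decRel _

/-- The vertex connectivity of a finite graph: the minimum number of vertices whose
deletion yields a disconnected graph or a graph with exactly one vertex. -/
noncomputable def vertexConnectivity {V : Type*} [Fintype V] (Γ : SimpleGraph V) : ℕ :=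
  sInf {n | ∃ S : Finset V, S.card = n ∧
    (¬ (SimpleGraph.induce ((↑S : Set V)ᶜ) Γ).Preconnected ∨ ((↑S : Set V)ᶜ).ncard = 1)}

/-- A subgroup is a maximal cyclic subgroup if it is cyclic and not properly contained
in any cyclic subgroup. -/
def IsMaximalCyclic {G : Type*} [Group G] (M : Subgroup G) : Prop :=
  IsCyclic ↥M ∧ ∀ N : Subgroup G, IsCyclic ↥N → M ≤ N → M = N

/-- `K` is a maximal cyclic subgroup of the subgroup `H`. -/
def IsMaximalCyclicIn {G : Type*} [Group G] (H K : Subgroup G) : Prop :=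
  IsCyclic ↥K ∧ K ≤ H ∧ ∀ N : Subgroup G, IsCyclic ↥N → N ≤ H → K ≤ N → K = N

/-- A generalized quaternion group: a dicyclic group `Q_{4n}` with `n ≥ 2` a power of 2. -/
def IsGeneralizedQuaternion (G : Type*) [Group G] : Prop :=
  ∃ n : ℕ, 2 ≤ n ∧ (∃ k : ℕ, n = 2 ^ k) ∧ Nonempty (G ≃* QuaternionGroup n)

lemma isCyclic_zpowers {G : Type*} [Group G] (u : G) : IsCyclic ↥(Subgroup.zpowers u) := by
  refine ⟨⟨⟨u, Subgroup.mem_zpowers u⟩, ?_⟩⟩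
  rintro ⟨x, hx⟩
  obtain ⟨n, hn⟩ := Subgroup.mem_zpowers_iff.mp hx
  refine ⟨n, ?_⟩
  ext
  simpa using hn

set_option maxHeartbeats 4000000 in
open scoped Classical in
/-- If `r ≥ 3`, the Sylow 2-subgroup is noncyclic with a maximal cyclic subgroup of order 2,
and all other Sylow subgroups are cyclic, then `δ(P(G)) < ∏_{i=2}^{r} p_i^{α_i}`. -/
theorem min_degree_lt_odd_part
    {G : Type*} [Group G] [Fintype G] (hnil : Group.IsNilpotent G)
    (r : ℕ) (hr : 3 ≤ r) (p α : Fin r → ℕ) (P : Fin r → Subgroup G)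
    (hp : ∀ i, (p i).Prime) (hmono : StrictMono p) (hα : ∀ i, 1 ≤ α i)
    (hcard : Fintype.card G = ∏ i, p i ^ α i)
    (hP : ∀ i, Nat.card ↥(P i) = p i ^ α i)
    (hp0 : p ⟨0, by omega⟩ = 2)
    (hP0nc : ¬ IsCyclic ↥(P ⟨0, by omega⟩))
    (hmax2 : ∃ z : G, z ∈ P ⟨0, by omega⟩ ∧
      IsMaximalCyclicIn (P ⟨0, by omega⟩) (Subgroup.zpowers z) ∧ orderOf z = 2)
    (hcyc : ∀ i : Fin r, i ≠ ⟨0, by omega⟩ → IsCyclic ↥(P i)) :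
    (powerGraph G).minDegree <
      ∏ i ∈ Finset.univ.filter (fun i : Fin r => i ≠ ⟨0, by omega⟩), p i ^ α i := by
  classical
  set i0 : Fin r := ⟨0, by omega⟩ with hi0def
  set i1 : Fin r := ⟨1, by omega⟩ with hi1def
  set i2 : Fin r := ⟨2, by omega⟩ with hi2def
  have hi01 : i0 ≠ i1 := by simp [hi0def, hi1def, Fin.ext_iff]
  have hi02 : i0 ≠ i2 := by simp [hi0def, hi2def, Fin.ext_iff]
  have hi12 : i1 ≠ i2 := by simp [hi1def, hi2def, Fin.ext_iff]
  -- Sylow subgroups are normal in a nilpotent group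
  have hsylnormal := ((isNilpotent_of_finite_tfae (G := G)).out 0 3).mp hnil
  have hppos : ∀ i, 0 < p i := fun i => (hp i).pos
  have hnormal : ∀ i, (P i).Normal := by
    intro i
    haveI : Fact (p i).Prime := ⟨hp i⟩
    have hpg : IsPGroup (p i) ↥(P i) := IsPGroup.iff_card.mpr ⟨α i, hP i⟩
    obtain ⟨Q, hPQ⟩ := hpg.exists_le_sylow
    obtain ⟨β, hβ⟩ := IsPGroup.iff_card.mp Q.isPGroup'
    have hdvd : p i ^ β ∣ Fintype.card G := by
      rw [← hβ, ← Nat.card_eq_fintype_card]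
      exact Subgroup.card_subgroup_dvd_card _
    have hβα : β ≤ α i := by
      rw [hcard, ← Finset.mul_prod_erase Finset.univ _ (Finset.mem_univ i)] at hdvd
      have hco : Nat.Coprime (p i ^ β) (∏ j ∈ Finset.univ.erase i, p j ^ α j) := by
        apply Nat.Coprime.pow_left
        apply Nat.Coprime.prod_right
        intro j hj
        exact Nat.Coprime.pow_right _
          ((Nat.coprime_primes (hp i) (hp j)).mpr
            (fun h => (Finset.mem_erase.mp hj).1 (hmono.injective h).symm))
      have := hco.dvd_of_dvd_mul_right hdvd
      exact (Nat.pow_dvd_pow_iff_le_right (hp i).one_lt).mp this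
    have hQP : (Q : Subgroup G) = P i := by
      refine (Subgroup.eq_of_le_of_card_ge hPQ ?_).symm
      rw [hβ, hP i]
      exact Nat.pow_le_pow_right (hppos i) hβα
    rw [← hQP]
    exact hsylnormal (p i) ⟨hp i⟩ Q
  -- disjointness and commutation
  have hdisj : ∀ i j, i ≠ j → Disjoint (P i) (P j) := by
    intro i j hij
    rw [Subgroup.disjoint_def]
    intro x hxi hxj
    have h1 : orderOf x ∣ p i ^ α i := by
      rw [← hP i, ← Subgroup.orderOf_mk x hxi]
      exact orderOf_dvd_natCard _
    have h2 : orderOf x ∣ p j ^ α j := by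
      rw [← hP j, ← Subgroup.orderOf_mk x hxj]
      exact orderOf_dvd_natCard _
    have hco : Nat.Coprime (p i ^ α i) (p j ^ α j) :=
      Nat.Coprime.pow _ _ ((Nat.coprime_primes (hp i) (hp j)).mpr (fun h => hij (hmono.injective h)))
    have : orderOf x = 1 := Nat.eq_one_of_dvd_coprimes hco h1 h2
    exact orderOf_eq_one_iff.mp this
  have hcomm : Pairwise fun i j : Fin r => ∀ x y : G, x ∈ P i → y ∈ P j → Commute x y :=
    fun i j hij x y hx hy =>
      Subgroup.commute_of_normal_of_disjoint _ _ (hnormal i) (hnormal j) (hdisj i j hij) x y hx hy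
  -- the product map
  let φ : (∀ i, ↥(P i)) →* G := Subgroup.noncommPiCoprod hcomm
  have hinj : Function.Injective φ :=
    Subgroup.injective_noncommPiCoprod_of_iSupIndep
      (Subgroup.independent_of_coprime_order hcomm (by
        intro i j hij
        rw [← Nat.card_eq_fintype_card, ← Nat.card_eq_fintype_card, hP i, hP j]
        exact Nat.Coprime.pow _ _
          ((Nat.coprime_primes (hp i) (hp j)).mpr (fun h => hij (hmono.injective h)))))
  have hbij : Function.Bijective φ := by
    refine (Fintype.bijective_iff_injective_and_card φ).mpr ⟨hinj, ?_⟩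
    rw [Fintype.card_pi, hcard]
    exact Finset.prod_congr rfl fun i _ => by
      rw [← Nat.card_eq_fintype_card, hP i]
  -- elements z and c
  obtain ⟨z, hzP, hzmax, hz2⟩ := hmax2
  have hz1 : z ≠ 1 := by
    intro h; rw [h, orderOf_one] at hz2; omega
  have hzz : z ^ 2 = 1 := by rw [← hz2]; exact pow_orderOf_eq_one z
  haveI hcyc1 : IsCyclic ↥(P i1) := hcyc i1 (Ne.symm hi01)
  obtain ⟨c', hc'⟩ := hcyc1.exists_generator
  obtain ⟨q, hqdef⟩ : ∃ q, q = p i1 ^ α i1 := ⟨_, rfl⟩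
  have hordc' : orderOf c' = q := by
    rw [orderOf_eq_card_of_forall_mem_zpowers hc', hP i1, hqdef]
  obtain ⟨c, hcdef⟩ : ∃ x : G, x = ↑c' := ⟨_, rfl⟩
  have hcP : c ∈ P i1 := hcdef ▸ c'.2
  have hordc : orderOf c = q := by rw [hcdef, Subgroup.orderOf_coe]; exact hordc'
  have hzc : Commute z c := hcomm hi01 z c hzP hcP
  obtain ⟨w, hwdef⟩ : ∃ x : G, x = z * c := ⟨_, rfl⟩
  -- q is odd
  have hp1odd : Odd (p i1) := by
    have h2 : p i0 < p i1 := hmono (by simp [hi0def, hi1def, Fin.mk_lt_mk])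
    rw [hp0] at h2
    exact (hp i1).odd_of_ne_two (by omega)
  have hqodd : Odd q := hqdef ▸ hp1odd.pow
  have hqpos : 0 < q := hqdef ▸ pow_pos (hppos i1) _
  have hcq : c ^ q = 1 := by rw [← hordc]; exact pow_orderOf_eq_one c
  -- z and c are powers of w
  have hwq : w ^ q = z := by
    obtain ⟨t, ht⟩ := hqodd
    have hzq : z ^ q = z := by
      rw [ht, pow_add, pow_mul, hzz, one_pow, one_mul, pow_one]
    rw [hwdef, hzc.mul_pow, hzq, hcq, mul_one]
  have hzw : z ∈ Subgroup.zpowers w := hwq ▸ pow_mem (Subgroup.mem_zpowers w) q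
  have hcw : c ∈ Subgroup.zpowers w := by
    have hc : c = z⁻¹ * w := by rw [hwdef, inv_mul_cancel_left]
    rw [hc]
    exact Subgroup.mul_mem _ (Subgroup.inv_mem _ hzw) (Subgroup.mem_zpowers w)
  -- maximality property of z
  have hmaxprop : ∀ u : G, u ∈ P i0 → ∀ k : ℕ, u ^ k = z → u = z := by
    intro u hu k hk
    obtain ⟨hcz, hlez, hmax⟩ := hzmax
    have hzmem : z ∈ Subgroup.zpowers u := hk ▸ pow_mem (Subgroup.mem_zpowers u) k
    have heq := hmax (Subgroup.zpowers u) (isCyclic_zpowers u)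
      (Subgroup.zpowers_le.mpr hu) (Subgroup.zpowers_le.mpr hzmem)
    have humem : u ∈ Subgroup.zpowers z := heq ▸ Subgroup.mem_zpowers u
    obtain ⟨n, hn⟩ := Subgroup.mem_zpowers_iff.mp humem
    have h2 : z ^ (2 : ℤ) = 1 := by exact_mod_cast hzz
    have hmod : z ^ n = z ^ (n % 2) := by
      conv_lhs => rw [← Int.emod_add_mul_ediv n 2]
      rw [zpow_add, zpow_mul, h2, one_zpow, mul_one]
    rcases Int.emod_two_eq_zero_or_one n with h | h
    · exfalso
      rw [← hn, hmod, h, zpow_zero] at hk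
      rw [one_pow] at hk
      exact hz1 hk.symm
    · rw [← hn, hmod, h, zpow_one]
  -- components of w
  obtain ⟨z₀, hz₀⟩ : ∃ a : ↥(P i0), (a : G) = z := ⟨⟨z, hzP⟩, rfl⟩
  have hφsingle : ∀ (i : Fin r) (y : ↥(P i)), φ (Pi.mulSingle i y) = ↑y :=
    fun i y => Subgroup.noncommPiCoprod_mulSingle i y
  obtain ⟨hwf, hwfdef⟩ : ∃ f : ∀ i, ↥(P i), f = Pi.mulSingle i0 z₀ * Pi.mulSingle i1 c' :=
    ⟨_, rfl⟩
  have hφw : φ hwf = w := by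
    rw [hwfdef, map_mul, hφsingle, hφsingle, hz₀, ← hcdef, hwdef]
  have hwf0 : hwf i0 = z₀ := by
    rw [hwfdef, Pi.mul_apply, Pi.mulSingle_eq_same, Pi.mulSingle_eq_of_ne hi01, mul_one]
  have hwf1 : hwf i1 = c' := by
    rw [hwfdef, Pi.mul_apply, Pi.mulSingle_eq_same, Pi.mulSingle_eq_of_ne (Ne.symm hi01),
      one_mul]
  -- the two finsets
  obtain ⟨Afin, hAdef⟩ : ∃ s : Finset G,
      s = (Finset.univ.filter (fun x => x ∈ Subgroup.zpowers w)).erase w := ⟨_, rfl⟩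
  obtain ⟨Bset, hBdef⟩ : ∃ s : Finset (∀ i, ↥(P i)), s = Finset.univ.filter
      (fun f => f i0 = z₀ ∧ orderOf (f i1) = q ∧ ∃ j, j ≠ i0 ∧ j ≠ i1 ∧ f j ≠ 1) := ⟨_, rfl⟩
  obtain ⟨Bfin, hBfdef⟩ : ∃ s : Finset G, s = Bset.image φ := ⟨_, rfl⟩
  -- neighbors of w lie in Afin ∪ Bfin
  have hsub : (powerGraph G).neighborFinset w ⊆ Afin ∪ Bfin := by
    intro x hx
    rw [SimpleGraph.mem_neighborFinset] at hx
    obtain ⟨hne, hor⟩ := hx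
    have hxA : x ∈ Subgroup.zpowers w → x ∈ Afin ∪ Bfin := by
      intro hxz
      apply Finset.mem_union_left
      rw [hAdef]
      exact Finset.mem_erase.mpr ⟨Ne.symm hne, Finset.mem_filter.mpr ⟨Finset.mem_univ x, hxz⟩⟩
    rcases hor with ⟨k, hkpos, hwk⟩ | ⟨k, hkpos, hxk⟩
    · -- w = x ^ k
      obtain ⟨f, hf⟩ := hbij.2 x
      have hfk : f ^ k = hwf := by
        apply hinj
        rw [map_pow, hf, ← hwk, hφw]
      have hfc : ∀ j, (f j) ^ k = hwf j := fun j => by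
        rw [← Pi.pow_apply, hfk]
      have hf0 : f i0 = z₀ := by
        have h0 := hfc i0
        rw [hwf0] at h0
        have hcoe : ((f i0 : G)) ^ k = z := by
          have := congrArg (Subtype.val) h0
          simpa [hz₀] using this
        exact Subtype.ext (by rw [hz₀]; exact hmaxprop _ (f i0).2 k hcoe)
      have hgen1 : ∀ y : ↥(P i1), y ∈ Subgroup.zpowers (f i1) := by
        intro y
        have h1 := hfc i1
        rw [hwf1] at h1
        have hle : Subgroup.zpowers c' ≤ Subgroup.zpowers (f i1) :=
          Subgroup.zpowers_le.mpr (h1 ▸ pow_mem (Subgroup.mem_zpowers (f i1)) k)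
        exact hle (hc' y)
      have hf1ord : orderOf (f i1) = q := by
        rw [orderOf_eq_card_of_forall_mem_zpowers hgen1, hP i1, hqdef]
      by_cases hrest : ∀ j, j ≠ i0 → j ≠ i1 → f j = 1
      · apply hxA
        have hfeq : f = Pi.mulSingle i0 z₀ * Pi.mulSingle i1 (f i1) := by
          funext j
          by_cases hj0 : j = i0
          · subst hj0
            rw [Pi.mul_apply, Pi.mulSingle_eq_same, Pi.mulSingle_eq_of_ne hi01, mul_one, hf0]
          · by_cases hj1 : j = i1
            · subst hj1
              rw [Pi.mul_apply, Pi.mulSingle_eq_same, Pi.mulSingle_eq_of_ne (Ne.symm hi01),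
                one_mul]
            · rw [Pi.mul_apply, Pi.mulSingle_eq_of_ne hj0, Pi.mulSingle_eq_of_ne hj1,
                mul_one, hrest j hj0 hj1]
        obtain ⟨n, hn⟩ := Subgroup.mem_zpowers_iff.mp (hc' (f i1))
        have hx2 : x = z * c ^ n := by
          rw [← hf, hfeq, map_mul, hφsingle, hφsingle, hz₀]
          congr 1
          rw [← hn, hcdef]
          push_cast
          rfl
        rw [hx2]
        exact Subgroup.mul_mem _ hzw (Subgroup.zpow_mem _ hcw n)
      · push_neg at hrest
        obtain ⟨j, hj0, hj1, hjne⟩ := hrest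
        apply Finset.mem_union_right
        rw [hBfdef]
        refine Finset.mem_image.mpr ⟨f, ?_, hf⟩
        rw [hBdef, Finset.mem_filter]
        exact ⟨Finset.mem_univ f, hf0, hf1ord, j, hj0, hj1, hjne⟩
    · exact hxA (hxk ▸ pow_mem (Subgroup.mem_zpowers w) k)
  -- cardinality of Afin
  have hAcard : Afin.card ≤ 2 * q - 1 := by
    rw [hAdef]
    have hmemw : w ∈ Finset.univ.filter (fun x => x ∈ Subgroup.zpowers w) :=
      Finset.mem_filter.mpr ⟨Finset.mem_univ w, Subgroup.mem_zpowers w⟩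
    rw [Finset.card_erase_of_mem hmemw]
    have hcardz : (Finset.univ.filter (fun x => x ∈ Subgroup.zpowers w)).card = orderOf w := by
      rw [← Fintype.card_subtype, ← Nat.card_eq_fintype_card]
      exact Nat.card_zpowers w
    rw [hcardz]
    have hdvd : orderOf w ∣ 2 * q := by
      apply orderOf_dvd_of_pow_eq_one
      have h1 : z ^ (2 * q) = 1 := by rw [pow_mul, hzz, one_pow]
      have h2 : c ^ (2 * q) = 1 := by rw [mul_comm, pow_mul, hcq, one_pow]
      rw [hwdef, hzc.mul_pow, h1, h2, one_mul]
    have hle : orderOf w ≤ 2 * q := Nat.le_of_dvd (by omega) hdvd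
    omega
  -- m2
  obtain ⟨m2, hm2⟩ : ∃ m, m = ∏ j ∈ Finset.univ.filter (fun j : Fin r => j ≠ i0 ∧ j ≠ i1),
      p j ^ α j := ⟨_, rfl⟩
  have hgenscard :
      (Finset.univ.filter (fun a : ↥(P i1) => orderOf a = q)).card = Nat.totient q := by
    have hd : q ∣ Fintype.card ↥(P i1) := by
      rw [← Nat.card_eq_fintype_card, hP i1, hqdef]
    simpa using IsCyclic.card_orderOf_eq_totient (α := ↥(P i1)) hd
  obtain ⟨t, htdef⟩ : ∃ t : ∀ j : Fin r, Finset ↥(P j), t = fun j => Finset.univ.filter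
      (fun a : ↥(P j) => (j = i0 → (a : G) = z) ∧ (j = i1 → a = 1)) := ⟨_, rfl⟩
  have ht0 : t i0 = {z₀} := by
    rw [htdef]
    ext a
    simp only [Finset.mem_filter, Finset.mem_univ, true_and, Finset.mem_singleton]
    constructor
    · rintro ⟨h1, -⟩
      exact Subtype.ext (by rw [hz₀]; exact h1 trivial)
    · rintro rfl
      exact ⟨fun _ => hz₀, fun h => absurd h hi01⟩
  have ht1 : t i1 = {1} := by
    rw [htdef]
    ext a
    simp only [Finset.mem_filter, Finset.mem_univ, true_and, Finset.mem_singleton]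
    constructor
    · rintro ⟨-, h2⟩
      exact h2 trivial
    · rintro rfl
      exact ⟨fun h => absurd h.symm hi01, fun _ => rfl⟩
  have htuniv : ∀ j, j ≠ i0 → j ≠ i1 → t j = Finset.univ := by
    intro j hj0 hj1
    rw [htdef]
    apply Finset.filter_true_of_mem
    intro a _
    exact ⟨fun h => absurd h hj0, fun h => absurd h hj1⟩
  obtain ⟨F0, hF0def⟩ : ∃ s, s = Fintype.piFinset t := ⟨_, rfl⟩
  have hF0card : F0.card = m2 := by
    rw [hF0def, Fintype.card_piFinset, hm2]
    rw [← Finset.prod_filter_of_ne (p := fun j : Fin r => j ≠ i0 ∧ j ≠ i1)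
      (f := fun j => (t j).card) ?_]
    · apply Finset.prod_congr rfl
      intro j hj
      obtain ⟨hj0, hj1⟩ := (Finset.mem_filter.mp hj).2
      rw [htuniv j hj0 hj1, Finset.card_univ, ← Nat.card_eq_fintype_card, hP j]
    · intro j _ hcard1
      by_contra hcon
      apply hcard1
      rcases not_and_or.mp hcon with h | h
      · rw [not_ne_iff.mp h]; simp [ht0]
      · rw [not_ne_iff.mp h]; simp [ht1]
  have hmem0 : Pi.mulSingle i0 z₀ ∈ F0 := by
    rw [hF0def, Fintype.mem_piFinset]
    intro j
    rw [htdef]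
    simp only [Finset.mem_filter, Finset.mem_univ, true_and]
    constructor
    · rintro rfl
      rw [Pi.mulSingle_eq_same, hz₀]
    · rintro rfl
      rw [Pi.mulSingle_eq_of_ne (Ne.symm hi01)]
  have hBcard : Bset.card ≤ Nat.totient q * (m2 - 1) := by
    have hle := Finset.card_le_card_of_injOn
      (f := fun f => (f i1, Function.update f i1 1))
      (s := Bset)
      (t := (Finset.univ.filter (fun a : ↥(P i1) => orderOf a = q)) ×ˢ
        (F0.erase (Pi.mulSingle i0 z₀))) ?_ ?_
    · calc Bset.card ≤ _ := hle
        _ = Nat.totient q * (m2 - 1) := by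
          rw [Finset.card_product, hgenscard, Finset.card_erase_of_mem hmem0, hF0card]
    · intro f hf
      rw [hBdef, Finset.mem_coe, Finset.mem_filter] at hf
      obtain ⟨-, hf0, hford, j, hj0, hj1, hjne⟩ := hf
      rw [Finset.mem_coe, Finset.mem_product]
      constructor
      · exact Finset.mem_filter.mpr ⟨Finset.mem_univ _, hford⟩
      · rw [Finset.mem_erase]
        constructor
        · intro hcon
          apply hjne
          simpa [Function.update_of_ne hj1, Pi.mulSingle_eq_of_ne hj0] using congrFun hcon j
        · rw [hF0def, Fintype.mem_piFinset]
          intro i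
          rw [htdef]
          simp only [Finset.mem_filter, Finset.mem_univ, true_and]
          constructor
          · rintro rfl
            simp [Function.update_of_ne hi01, hf0, hz₀]
          · rintro rfl
            simp
    · intro f hf g hg heq
      have h1 := congrArg Prod.fst heq
      have h2 := congrArg Prod.snd heq
      simp only at h1 h2
      funext j
      by_cases hj : j = i1
      · subst hj; exact h1
      · have := congrFun h2 j
        rwa [Function.update_of_ne hj, Function.update_of_ne hj] at this
  -- degree bound
  have hBfcard : Bfin.card ≤ Nat.totient q * (m2 - 1) :=
    le_trans (hBfdef ▸ Finset.card_image_le) hBcard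
  have hdeg : (powerGraph G).degree w ≤ 2 * q - 1 + Nat.totient q * (m2 - 1) := by
    calc (powerGraph G).degree w ≤ (Afin ∪ Bfin).card := Finset.card_le_card hsub
      _ ≤ Afin.card + Bfin.card := Finset.card_union_le _ _
      _ ≤ 2 * q - 1 + Nat.totient q * (m2 - 1) := Nat.add_le_add hAcard hBfcard
  -- the odd part equals q * m2
  have hmsplit : ∏ i ∈ Finset.univ.filter (fun i : Fin r => i ≠ i0), p i ^ α i = q * m2 := by
    have hi1mem : i1 ∈ Finset.univ.filter (fun i : Fin r => i ≠ i0) := by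
      simp [Ne.symm hi01]
    rw [← Finset.mul_prod_erase _ _ hi1mem, hm2, hqdef]
    congr 1
    apply Finset.prod_congr _ (fun _ _ => rfl)
    ext j
    simp only [Finset.mem_erase, Finset.mem_filter, Finset.mem_univ, true_and]
    tauto
  -- m2 is at least p i1 + 2
  have hp1gt : 2 < p i1 := by
    have h2 : p i0 < p i1 := hmono (by simp [hi0def, hi1def, Fin.mk_lt_mk])
    omega
  have hm2ge : p i1 + 2 ≤ m2 := by
    have hi2mem : i2 ∈ Finset.univ.filter (fun j : Fin r => j ≠ i0 ∧ j ≠ i1) := by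
      simp [Ne.symm hi02, Ne.symm hi12]
    have hsingle : p i2 ^ α i2 ≤ m2 := by
      rw [hm2]
      exact Finset.single_le_prod' (fun j _ => Nat.one_le_iff_ne_zero.mpr
        (pow_ne_zero _ (hp j).pos.ne')) hi2mem
    have hle2 : p i2 ≤ p i2 ^ α i2 := Nat.le_self_pow (by have := hα i2; omega) _
    have hlt12 : p i1 < p i2 := hmono (by simp [hi1def, hi2def, Fin.mk_lt_mk])
    have hodd2 : Odd (p i2) := (hp i2).odd_of_ne_two (by omega)
    obtain ⟨a, ha⟩ := hp1odd
    obtain ⟨b, hb⟩ := hodd2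
    omega
  -- final arithmetic
  have htot : Nat.totient q = p i1 ^ (α i1 - 1) * (p i1 - 1) := by
    rw [hqdef]
    exact Nat.totient_prime_pow (hp i1) (hα i1)
  have hqs : q = p i1 ^ (α i1 - 1) * p i1 := by
    rw [hqdef]
    conv_lhs => rw [← Nat.sub_add_cancel (hα i1)]
    rw [pow_succ]
  have hfinal : 2 * q - 1 + Nat.totient q * (m2 - 1) < q * m2 := by
    obtain ⟨s, hs⟩ : ∃ s, s = p i1 ^ (α i1 - 1) := ⟨_, rfl⟩
    have hs1 : 1 ≤ s := hs ▸ Nat.one_le_iff_ne_zero.mpr (pow_ne_zero _ (hp i1).pos.ne')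
    obtain ⟨u, hu⟩ : ∃ u, p i1 = u + 2 := ⟨p i1 - 2, by omega⟩
    obtain ⟨v, hv⟩ : ∃ v, m2 = v + 1 := ⟨m2 - 1, by omega⟩
    have hvge : u + 3 ≤ v := by omega
    rw [htot, hqs, ← hs, hu, hv]
    have e1 : u + 2 - 1 = u + 1 := by omega
    have e2 : v + 1 - 1 = v := by omega
    rw [e1, e2]
    have key : 2 * (s * (u + 2)) + s * (u + 1) * v ≤ s * (u + 2) * (v + 1) := by
      have h1 : s * (u + 2) ≤ s * v := Nat.mul_le_mul_left s (by omega)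
      calc 2 * (s * (u + 2)) + s * (u + 1) * v
          = s * (u + 2) + (s * (u + 1) * v + s * (u + 2)) := by ring
        _ ≤ s * v + (s * (u + 1) * v + s * (u + 2)) := Nat.add_le_add_right h1 _
        _ = s * (u + 2) * (v + 1) := by ring
    have hpos : 0 < 2 * (s * (u + 2)) := by positivity
    calc 2 * (s * (u + 2)) - 1 + s * (u + 1) * v
        < 2 * (s * (u + 2)) + s * (u + 1) * v :=
          Nat.add_lt_add_right (Nat.sub_lt hpos one_pos) _
      _ ≤ s * (u + 2) * (v + 1) := key
  calc (powerGraph G).minDegree ≤ (powerGraph G).degree w :=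
        (powerGraph G).minDegree_le_degree w
    _ ≤ 2 * q - 1 + Nat.totient q * (m2 - 1) := hdeg
    _ < q * m2 := hfinal
    _ = ∏ i ∈ Finset.univ.filter (fun i : Fin r => i ≠ i0), p i ^ α i := hmsplit.symm
end

section
/- Let G be a finite p-group for a prime p. Then κ(P(G)) = δ(P(G)) if and only if either (i) G is cyclic, or (ii) G is a noncyclic 2-group containing a maximal cyclic subgroup of order 2. -/
set_option linter.unusedSectionVars false

open Subgroup SimpleGraph

section Aux
variable {G : Type*} [Group G] [Fintype G] [DecidableEq G]

lemma mem_zpowers_pos {x y : G} (h : x ∈ zpowers y) : ∃ k : ℕ, 0 < k ∧ x = y ^ k := by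
  obtain ⟨k, hk⟩ := (isOfFinOrder_of_finite y).mem_powers_iff_mem_zpowers.mpr h
  simp only at hk
  rcases Nat.eq_zero_or_pos k with rfl | hpos
  · exact ⟨orderOf y, orderOf_pos y, by rw [pow_orderOf_eq_one, ← hk, pow_zero]⟩
  · exact ⟨k, hpos, hk.symm⟩

lemma gcd_pow_mem_zpowers (g : G) (b : ℕ) :
    g ^ (Nat.gcd b (orderOf g)) ∈ zpowers (g ^ b) := by
  have hb := Nat.gcd_eq_gcd_ab b (orderOf g)
  have key : g ^ ((Nat.gcd b (orderOf g) : ℤ)) = (g ^ b) ^ (Nat.gcdA b (orderOf g)) := by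
    rw [hb, zpow_add, zpow_mul, zpow_mul, zpow_natCast, zpow_natCast,
      pow_orderOf_eq_one, one_zpow, mul_one]
  exact ⟨Nat.gcdA b (orderOf g), by simp only []; rw [← key, zpow_natCast]⟩

lemma zpowers_le_zpowers_of_gcd_dvd {g : G} {a b : ℕ}
    (hdvd : Nat.gcd b (orderOf g) ∣ Nat.gcd a (orderOf g)) :
    g ^ a ∈ zpowers (g ^ b) := by
  have h1 : g ^ (Nat.gcd b (orderOf g)) ∈ zpowers (g ^ b) := gcd_pow_mem_zpowers g b
  have h2 : Nat.gcd b (orderOf g) ∣ a := hdvd.trans (Nat.gcd_dvd_left a (orderOf g))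
  obtain ⟨c, hc⟩ := h2
  rw [hc, pow_mul]
  exact pow_mem h1 c

/-- In a `p`-group, any two elements of a common cyclic subgroup are comparable. -/
lemma comparable_of_mem_zpowers {p : ℕ} (hp : p.Prime) (hpg : IsPGroup p G)
    {g x y : G} (hx : x ∈ zpowers g) (hy : y ∈ zpowers g) :
    x ∈ zpowers y ∨ y ∈ zpowers x := by
  haveI : Fact p.Prime := ⟨hp⟩
  obtain ⟨j, hj⟩ := IsPGroup.iff_orderOf.mp hpg g
  obtain ⟨a, -, ha⟩ := mem_zpowers_pos hx
  obtain ⟨b, -, hb⟩ := mem_zpowers_pos hy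
  obtain ⟨i1, -, hi1⟩ := (Nat.dvd_prime_pow hp).mp (hj ▸ Nat.gcd_dvd_right a (orderOf g))
  obtain ⟨i2, -, hi2⟩ := (Nat.dvd_prime_pow hp).mp (hj ▸ Nat.gcd_dvd_right b (orderOf g))
  rcases le_total i2 i1 with hle | hle
  · left
    rw [ha, hb]
    exact zpowers_le_zpowers_of_gcd_dvd (by rw [hj, hi1, hi2]; exact pow_dvd_pow p hle)
  · right
    rw [ha, hb]
    exact zpowers_le_zpowers_of_gcd_dvd (by rw [hj, hi1, hi2]; exact pow_dvd_pow p hle)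

lemma powerGraph_adj {x y : G} :
    (powerGraph G).Adj x y ↔ x ≠ y ∧ (x ∈ zpowers y ∨ y ∈ zpowers x) := by
  constructor
  · rintro ⟨hne, h⟩
    refine ⟨hne, h.imp ?_ ?_⟩
    · rintro ⟨k, -, rfl⟩
      exact pow_mem (mem_zpowers y) k
    · rintro ⟨k, -, rfl⟩
      exact pow_mem (mem_zpowers x) k
  · rintro ⟨hne, h⟩
    exact ⟨hne, h.imp mem_zpowers_pos mem_zpowers_pos⟩

lemma isCyclic_zpowers_s13 (g : G) : IsCyclic ↥(zpowers g) := by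
  refine ⟨⟨⟨g, mem_zpowers g⟩, fun x => ?_⟩⟩
  obtain ⟨k, hk⟩ := x.2
  exact ⟨k, Subtype.ext (by simpa using hk)⟩

lemma isCyclic_subgroup_eq_zpowers {H : Subgroup G} (h : IsCyclic ↥H) :
    ∃ g : G, g ∈ H ∧ H = zpowers g := by
  obtain ⟨g0, hg0⟩ := h.exists_generator
  refine ⟨(g0 : G), g0.2, le_antisymm (fun a ha => ?_) (zpowers_le.mpr g0.2)⟩
  obtain ⟨k, hk⟩ := hg0 ⟨a, ha⟩
  exact ⟨k, by simpa using congrArg (Subtype.val) hk⟩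

/-- Every element lies in some maximal cyclic subgroup of the form `zpowers g`. -/
lemma exists_maximal_zpowers (x : G) :
    ∃ g : G, x ∈ zpowers g ∧ IsMaximalCyclic (zpowers g) := by
  classical
  let s : Finset G := Finset.univ.filter (fun g => x ∈ zpowers g)
  have hxs : x ∈ s := by simp [s, mem_zpowers]
  obtain ⟨g, hg, hmax⟩ := s.exists_max_image (fun g => Nat.card (zpowers g)) ⟨x, hxs⟩
  have hxg : x ∈ zpowers g := by simpa [s] using hg
  refine ⟨g, hxg, _root_.isCyclic_zpowers_s13 g, fun N hN hle => ?_⟩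
  obtain ⟨h, hhN, rfl⟩ := isCyclic_subgroup_eq_zpowers hN
  have hxh : x ∈ zpowers h := hle hxg
  have hhs : h ∈ s := by simpa [s] using hxh
  exact Subgroup.eq_of_le_of_card_ge hle (hmax h hhs)

noncomputable def zFin (g : G) : Finset G := (Set.toFinite (zpowers g : Set G)).toFinset

lemma mem_zFin {g u : G} : u ∈ zFin g ↔ u ∈ zpowers g := Set.Finite.mem_toFinset _

lemma card_zFin (g : G) : (zFin g).card = orderOf g := by
  rw [zFin, ← Set.ncard_eq_toFinset_card, ← Nat.card_coe_set_eq]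
  exact Nat.card_zpowers g

/-- Degree lower bound: a vertex of a cyclic subgroup is adjacent to all of it. -/
lemma degree_ge_of_mem_zpowers {p : ℕ} (hp : p.Prime) (hpg : IsPGroup p G)
    {g v : G} (hv : v ∈ zpowers g) :
    orderOf g - 1 ≤ (powerGraph G).degree v := by
  classical
  have hsub : ((zFin g).erase v) ⊆ (powerGraph G).neighborFinset v := by
    intro u hu
    rw [Finset.mem_erase, mem_zFin] at hu
    rw [SimpleGraph.mem_neighborFinset, powerGraph_adj]
    exact ⟨fun h => hu.1 h.symm, comparable_of_mem_zpowers hp hpg hv hu.2⟩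
  calc orderOf g - 1 = ((zFin g).erase v).card := by
        rw [Finset.card_erase_of_mem (mem_zFin.mpr hv), card_zFin]
    _ ≤ _ := Finset.card_le_card hsub

/-- The neighbors of a generator of a maximal cyclic subgroup. -/
lemma neighborFinset_gen {p : ℕ} (hp : p.Prime) (hpg : IsPGroup p G)
    {g : G} (hmax : IsMaximalCyclic (zpowers g)) :
    (powerGraph G).neighborFinset g = (zFin g).erase g := by
  classical
  ext u
  rw [SimpleGraph.mem_neighborFinset, powerGraph_adj, Finset.mem_erase, mem_zFin]
  constructor
  · rintro ⟨hne, h | h⟩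
    · refine ⟨fun h' => hne h'.symm, ?_⟩
      have : zpowers g ≤ zpowers u := zpowers_le.mpr h
      have := hmax.2 (zpowers u) (_root_.isCyclic_zpowers_s13 u) this
      rw [this]
      exact mem_zpowers u
    · exact ⟨fun h' => hne h'.symm, h⟩
  · rintro ⟨hne, h⟩
    exact ⟨fun h' => hne h'.symm, Or.inr h⟩

/-- Helper: a graph having a nonempty adjacency-closed set with nonempty complement
is not preconnected. -/
lemma not_preconnected_of {V : Type*} {Γ : SimpleGraph V} {A : Set V} {a b : V}
    (ha : a ∈ A) (hb : b ∉ A) (hcl : ∀ u v, u ∈ A → Γ.Adj u v → v ∈ A) :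
    ¬ Γ.Preconnected := by
  intro h
  have key : ∀ {u v : V} (_ : Γ.Walk u v), u ∈ A → v ∈ A := by
    intro u v w
    induction w with
    | nil => exact id
    | cons h p ih => exact fun hu => ih (hcl _ _ hu h)
  obtain ⟨w⟩ := h a b
  exact hb (key w ha)

lemma preconnected_induce_empty :
    (SimpleGraph.induce ((↑(∅ : Finset G) : Set G)ᶜ) (powerGraph G)).Preconnected := by
  have h1 : (1 : G) ∈ ((↑(∅ : Finset G) : Set G)ᶜ) := by simp
  have key : ∀ w : ((↑(∅ : Finset G) : Set G)ᶜ : Set G),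
      (SimpleGraph.induce ((↑(∅ : Finset G) : Set G)ᶜ) (powerGraph G)).Reachable w ⟨1, h1⟩ := by
    intro w
    by_cases hw : (w : G) = 1
    · have : w = ⟨1, h1⟩ := Subtype.ext hw
      rw [this]
    · refine SimpleGraph.Adj.reachable ?_
      show (powerGraph G).Adj (w : G) 1
      exact ⟨hw, Or.inr ⟨orderOf (w : G), orderOf_pos _, (pow_orderOf_eq_one _).symm⟩⟩
  intro u v
  exact (key u).trans (key v).symm

end Aux

theorem power_graph_kappa_eq_delta_iff_p_group
    {G : Type*} [Group G] [Fintype G] (p : ℕ) (hp : p.Prime) (hpg : IsPGroup p G) :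
    vertexConnectivity (powerGraph G) = (powerGraph G).minDegree ↔
      (IsCyclic G ∨
        (¬ IsCyclic G ∧ IsPGroup 2 G ∧
          ∃ x : G, IsMaximalCyclic (Subgroup.zpowers x) ∧ orderOf x = 2)) := by
  classical
  haveI : Fact p.Prime := ⟨hp⟩
  constructor
  · intro hkd
    by_cases hc : IsCyclic G
    · exact Or.inl hc
    right
    -- choose a maximal cyclic subgroup of minimal order
    have hTne : {n | ∃ g : G, IsMaximalCyclic (zpowers g) ∧ orderOf g = n}.Nonempty := by
      obtain ⟨g, -, hg⟩ := exists_maximal_zpowers (1 : G)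
      exact ⟨orderOf g, g, hg, rfl⟩
    obtain ⟨g, hgmax, hgcard⟩ := Nat.sInf_mem hTne
    have hδ : orderOf g - 1 ≤ (powerGraph G).minDegree := by
      obtain ⟨v, hv⟩ := (powerGraph G).exists_minimal_degree_vertex
      obtain ⟨h, hvh, hhmax⟩ := exists_maximal_zpowers v
      have h1 : orderOf g ≤ orderOf h := hgcard ▸ Nat.sInf_le ⟨h, hhmax, rfl⟩
      rw [hv]
      exact le_trans (Nat.sub_le_sub_right h1 1) (degree_ge_of_mem_zpowers hp hpg hvh)
    obtain ⟨h0, hh0⟩ : ∃ h0 : G, h0 ∉ zpowers g := by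
      by_contra hcon
      push_neg at hcon
      exact hc ⟨⟨g, hcon⟩⟩
    set S : Finset G := (zFin g).filter (fun y => zpowers y ≠ zpowers g) with hS
    have hmemS : ∀ y : G, y ∈ S ↔ (y ∈ zpowers g ∧ zpowers y ≠ zpowers g) := by
      intro y; simp [hS, mem_zFin]
    have hgS : g ∉ S := by simp [hmemS g]
    have hh0S : h0 ∉ S := fun hmem => hh0 ((hmemS h0).mp hmem).1
    have hgC : (g : G) ∈ ((↑S : Set G)ᶜ) := by simpa using hgS
    have hh0C : h0 ∈ ((↑S : Set G)ᶜ) := by simpa using hh0S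
    have hdisc : ¬ (SimpleGraph.induce ((↑S : Set G)ᶜ) (powerGraph G)).Preconnected := by
      refine not_preconnected_of
        (A := {v : ((↑S : Set G)ᶜ : Set G) | zpowers (v : G) = zpowers g})
        (a := ⟨g, hgC⟩) (b := ⟨h0, hh0C⟩) rfl ?_ ?_
      · intro hmem
        simp only [Set.mem_setOf_eq] at hmem
        exact hh0 (hmem ▸ mem_zpowers h0)
      · rintro u w hu hadj
        have hadj' : (powerGraph G).Adj (u : G) (w : G) := hadj
        rw [powerGraph_adj] at hadj'
        simp only [Set.mem_setOf_eq] at hu ⊢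
        rcases hadj'.2 with h | h
        · have hle : zpowers g ≤ zpowers (w : G) := by rw [← hu]; exact zpowers_le.mpr h
          exact (hgmax.2 (zpowers (w : G)) (_root_.isCyclic_zpowers_s13 _) hle).symm
        · have hwM : (w : G) ∈ zpowers g := hu ▸ h
          have hwnS : (w : G) ∉ S := fun hmem => w.2 (Finset.mem_coe.mpr hmem)
          by_contra hne
          exact hwnS ((hmemS _).mpr ⟨hwM, hne⟩)
    have hκle : vertexConnectivity (powerGraph G) ≤ S.card :=
      Nat.sInf_le ⟨S, rfl, Or.inl hdisc⟩
    have hsub : S ⊆ (zFin g).erase g := by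
      intro y hy
      rw [Finset.mem_erase, mem_zFin]
      obtain ⟨h1, h2⟩ := (hmemS y).mp hy
      exact ⟨fun hyg => h2 (hyg ▸ rfl), h1⟩
    have hcard1 : ((zFin g).erase g).card = orderOf g - 1 := by
      rw [Finset.card_erase_of_mem (mem_zFin.mpr (mem_zpowers g)), card_zFin]
    have hge : orderOf g - 1 ≤ S.card := by
      rw [← hkd] at hδ
      exact le_trans hδ hκle
    have hSeq : S = (zFin g).erase g :=
      Finset.eq_of_subset_of_card_le hsub (by rw [hcard1]; exact hge)
    have hginv : g⁻¹ = g := by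
      by_contra hne
      have h1 : g⁻¹ ∈ (zFin g).erase g := by
        rw [Finset.mem_erase, mem_zFin]
        exact ⟨hne, inv_mem (mem_zpowers g)⟩
      rw [← hSeq] at h1
      exact ((hmemS g⁻¹).mp h1).2 zpowers_inv
    have hsq : g ^ 2 = 1 := by
      rw [pow_two]
      exact mul_eq_one_iff_inv_eq.mpr hginv
    have hdvd : orderOf g ∣ 2 := orderOf_dvd_of_pow_eq_one hsq
    have hord2 : orderOf g = 2 := by
      rcases (Nat.prime_two.eq_one_or_self_of_dvd _ hdvd) with h1 | h2
      · exfalso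
        have hg1 : g = 1 := orderOf_eq_one_iff.mp h1
        apply hc
        refine ⟨⟨g, fun x => ?_⟩⟩
        have heq : zpowers g = zpowers x :=
          hgmax.2 (zpowers x) (_root_.isCyclic_zpowers_s13 x)
            (by rw [hg1, Subgroup.zpowers_one_eq_bot]; exact bot_le)
        show x ∈ zpowers g
        rw [heq]; exact mem_zpowers x
      · exact h2
    have hp2 : p = 2 := by
      obtain ⟨k, hk⟩ := IsPGroup.iff_orderOf.mp hpg g
      rw [hord2] at hk
      rcases Nat.eq_zero_or_pos k with rfl | hkpos
      · simp at hk
      · have : p ∣ 2 := hk ▸ dvd_pow_self p hkpos.ne'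
        exact (Nat.prime_dvd_prime_iff_eq hp Nat.prime_two).mp this
    subst hp2
    exact ⟨hc, hpg, g, hgmax, hord2⟩
  · rintro (hc | ⟨hnc, -, x, hxmax, hxord⟩)
    · obtain ⟨g, hg⟩ := hc.exists_generator
      have hadj : ∀ u v : G, u ≠ v → (powerGraph G).Adj u v := fun u v h =>
        powerGraph_adj.mpr ⟨h, comparable_of_mem_zpowers hp hpg (hg u) (hg v)⟩
      have hdeg : ∀ v : G, (powerGraph G).degree v = Fintype.card G - 1 := by
        intro v
        have hnb : (powerGraph G).neighborFinset v = Finset.univ.erase v := by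
          ext u
          rw [SimpleGraph.mem_neighborFinset, Finset.mem_erase]
          constructor
          · exact fun h => ⟨h.ne', Finset.mem_univ u⟩
          · exact fun h => hadj v u (Ne.symm h.1)
        rw [SimpleGraph.degree, hnb, Finset.card_erase_of_mem (Finset.mem_univ v),
          Finset.card_univ]
      have hδ : (powerGraph G).minDegree = Fintype.card G - 1 := by
        obtain ⟨v, hv⟩ := (powerGraph G).exists_minimal_degree_vertex
        rw [hv, hdeg]
      have hmemN : (Fintype.card G - 1) ∈ {n | ∃ S : Finset G, S.card = n ∧
          (¬ (SimpleGraph.induce ((↑S : Set G)ᶜ) (powerGraph G)).Preconnected ∨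
            ((↑S : Set G)ᶜ).ncard = 1)} := by
        refine ⟨Finset.univ.erase g, ?_, Or.inr ?_⟩
        · rw [Finset.card_erase_of_mem (Finset.mem_univ g), Finset.card_univ]
        · have hcompl : ((↑(Finset.univ.erase g) : Set G)ᶜ) = {g} := by
            ext u
            simp [eq_comm]
          rw [hcompl, Set.ncard_singleton]
      have hκ : vertexConnectivity (powerGraph G) = Fintype.card G - 1 := by
        refine le_antisymm (Nat.sInf_le hmemN) (le_csInf ⟨_, hmemN⟩ ?_)
        rintro n ⟨S, rfl, hprop | hprop⟩
        · exfalso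
          apply hprop
          intro u v
          by_cases huv : u = v
          · subst huv; exact Reachable.refl u
          · exact SimpleGraph.Adj.reachable
              (by exact hadj (u : G) (v : G) (fun e => huv (Subtype.ext e)))
        · have hsum := Set.ncard_add_ncard_compl (↑S : Set G)
          rw [hprop, Set.ncard_coe_finset, Nat.card_eq_fintype_card] at hsum
          omega
      rw [hκ, hδ]
    · have hx1 : x ≠ 1 := by
        intro h
        rw [h, orderOf_one] at hxord
        norm_num at hxord
      haveI : Nontrivial G := Nontrivial.of_not_isCyclic hnc
      have hzx : ∀ z : G, z ∈ zpowers x ↔ z = 1 ∨ z = x := by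
        intro z
        constructor
        · intro hz
          obtain ⟨k, -, rfl⟩ := mem_zpowers_pos hz
          rcases Nat.mod_two_eq_zero_or_one k with h0 | h1
          · left; rw [← pow_mod_orderOf, hxord, h0, pow_zero]
          · right; rw [← pow_mod_orderOf, hxord, h1, pow_one]
        · rintro (rfl | h)
          · exact one_mem _
          · rw [h]; exact mem_zpowers x
      obtain ⟨y, hy⟩ : ∃ y : G, y ∉ zpowers x := by
        by_contra hcon
        push_neg at hcon
        exact hnc ⟨⟨x, hcon⟩⟩
      have hy1 : y ≠ 1 := fun h => hy (h ▸ one_mem _)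
      have hyx : y ≠ x := fun h => hy (h ▸ mem_zpowers x)
      have hnb : (powerGraph G).neighborFinset x = {1} := by
        rw [neighborFinset_gen hp hpg hxmax]
        ext u
        rw [Finset.mem_erase, mem_zFin, Finset.mem_singleton]
        constructor
        · rintro ⟨hne, hu⟩
          rcases (hzx u).mp hu with rfl | rfl
          · rfl
          · exact absurd rfl hne
        · rintro rfl
          exact ⟨fun h => hx1 h.symm, one_mem _⟩
      have hdegx : (powerGraph G).degree x = 1 := by
        rw [SimpleGraph.degree, hnb, Finset.card_singleton]
      have hδ : (powerGraph G).minDegree = 1 := by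
        apply le_antisymm
        · rw [← hdegx]; exact SimpleGraph.minDegree_le_degree _ x
        · apply SimpleGraph.le_minDegree_of_forall_le_degree
          intro v
          refine (SimpleGraph.degree_pos_iff_exists_adj _ _).mpr ?_
          by_cases hv : v = 1
          · subst hv
            exact ⟨x, powerGraph_adj.mpr ⟨fun h => hx1 h.symm, Or.inl (one_mem _)⟩⟩
          · exact ⟨1, powerGraph_adj.mpr ⟨hv, Or.inr (one_mem _)⟩⟩
      have hxC : (x : G) ∈ ((↑({1} : Finset G) : Set G)ᶜ) := by simpa using hx1
      have hyC : y ∈ ((↑({1} : Finset G) : Set G)ᶜ) := by simpa using hy1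
      have hdisc : ¬ (SimpleGraph.induce ((↑({1} : Finset G) : Set G)ᶜ)
          (powerGraph G)).Preconnected := by
        refine not_preconnected_of (A := {v : ((↑({1} : Finset G) : Set G)ᶜ : Set G) |
          (v : G) = x}) (a := ⟨x, hxC⟩) (b := ⟨y, hyC⟩) rfl (fun h => hyx h) ?_
        rintro u w hu hadj
        have hadj' : (powerGraph G).Adj (u : G) (w : G) := hadj
        simp only [Set.mem_setOf_eq] at hu
        rw [hu] at hadj'
        have hwmem : (w : G) ∈ (powerGraph G).neighborFinset x :=
          (SimpleGraph.mem_neighborFinset _ _ _).mpr hadj'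
        rw [hnb, Finset.mem_singleton] at hwmem
        exact absurd hwmem (by simpa using w.2)
      have hmem1 : 1 ∈ {n | ∃ S : Finset G, S.card = n ∧
          (¬ (SimpleGraph.induce ((↑S : Set G)ᶜ) (powerGraph G)).Preconnected ∨
            ((↑S : Set G)ᶜ).ncard = 1)} :=
        ⟨{1}, Finset.card_singleton 1, Or.inl hdisc⟩
      have hκ : vertexConnectivity (powerGraph G) = 1 := by
        refine le_antisymm (Nat.sInf_le hmem1) ?_
        rw [Nat.one_le_iff_ne_zero]
        intro h0
        rcases Nat.sInf_eq_zero.mp h0 with hmem | hempty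
        · obtain ⟨S, hS0, hprop⟩ := hmem
          rw [Finset.card_eq_zero] at hS0
          subst hS0
          rcases hprop with hdisc' | hcard'
          · exact hdisc' preconnected_induce_empty
          · have huniv : ((↑(∅ : Finset G) : Set G)ᶜ) = Set.univ := by simp
            rw [huniv, Set.ncard_univ, Nat.card_eq_fintype_card] at hcard'
            have hlt := Fintype.one_lt_card (α := G)
            omega
        · rw [hempty] at hmem1
          exact Set.notMem_empty 1 hmem1
      rw [hκ, hδ]
end
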